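/- Intersecting Planes Lemma (rigidity of contact planes): Let 1 ≤ k ≤ n and let φ : (ℝⁿ)ᵏ → ℝ be an alternating k-linear map of comass at most one. Let u = (u₁, …, u_k) and w = (w₁, …, w_k) be orthonormal k-tuples in ℝⁿ with φ(u₁, …, u_k) = 1 and φ(w₁, …, w_k) = 1. If the subspace span{u₁, …, u_k} ∩ span{w₁, …, w_k} has dimension at least k − 1, then span{u₁, …, u_k} = span{w₁, …, w_k} and moreover u₁ ∧ ⋯ ∧ u_k = w₁ ∧ ⋯ ∧ w_k as elements of the k-th exterior power of ℝⁿ (i.e. the two oriented k-planes coincide). -/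

import Mathlib

open Submodule Module

set_option maxHeartbeats 1000000
set_option synthInstance.maxHeartbeats 400000

private lemma span_snoc' {m : ℕ} {X : Type*} [AddCommGroup X] [Module ℝ X]
    (e : Fin m → X) (a : X) :
    Submodule.span ℝ (Set.range (Fin.snoc e a : Fin (m+1) → X)) =
      Submodule.span ℝ {a} ⊔ Submodule.span ℝ (Set.range e) := by
  have h : Set.range (Fin.snoc e a : Fin (m+1) → X) = insert a (Set.range e) := by
    ext x
    constructor
    · rintro ⟨i, rfl⟩
      refine Fin.lastCases ?_ (fun j => ?_) i
      · left; simp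
      · right; exact ⟨j, by simp⟩
    · rintro (rfl | ⟨j, rfl⟩)
      · exact ⟨Fin.last m, by simp⟩
      · exact ⟨j.castSucc, by simp⟩
  rw [h, Submodule.span_insert]

private lemma orthonormal_snoc' {N : Type*} [NormedAddCommGroup N] [InnerProductSpace ℝ N]
    {m : ℕ} {e : Fin m → N} {a : N} (he : Orthonormal ℝ e) (ha : ‖a‖ = 1)
    (hperp : ∀ i, inner ℝ (e i) a = (0:ℝ)) :
    Orthonormal ℝ (Fin.snoc e a : Fin (m+1) → N) := by
  rw [orthonormal_iff_ite] at he ⊢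
  intro i j
  refine Fin.lastCases ?_ (fun i' => ?_) i <;>
    refine Fin.lastCases ?_ (fun j' => ?_) j
  · simp [Fin.snoc_last, real_inner_self_eq_norm_mul_norm, ha]
  · rw [Fin.snoc_last, Fin.snoc_castSucc, real_inner_comm, hperp j',
      if_neg (by simp [Fin.ext_iff, (Fin.castSucc_lt_last j').ne'])]
  · rw [Fin.snoc_last, Fin.snoc_castSucc, hperp i',
      if_neg (by simp [Fin.ext_iff, (Fin.castSucc_lt_last i').ne])]
  · rw [Fin.snoc_castSucc, Fin.snoc_castSucc, he i' j']
    simp [Fin.ext_iff]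

private lemma key' {n k : ℕ}
    (φ : AlternatingMap ℝ (EuclideanSpace ℝ (Fin n)) ℝ (Fin k))
    {p q : Fin k → EuclideanSpace ℝ (Fin n)}
    (hp : Orthonormal ℝ p) (hq : Orthonormal ℝ q)
    (hspan : Submodule.span ℝ (Set.range p) = Submodule.span ℝ (Set.range q)) :
    |φ q| = |φ p| ∧ (φ p = 1 → φ q = 1 →
      ExteriorAlgebra.ιMulti ℝ k p = ExteriorAlgebra.ιMulti ℝ k q) := by
  classical
  set U := Submodule.span ℝ (Set.range p) with hU
  have hpU : ∀ i, p i ∈ U := fun i => Submodule.subset_span ⟨i, rfl⟩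
  have hqU : ∀ i, q i ∈ U := fun i => hspan ▸ Submodule.subset_span ⟨i, rfl⟩
  set p' : Fin k → U := Set.codRestrict p U hpU with hp'def
  set q' : Fin k → U := Set.codRestrict q U hqU with hq'def
  have hp' : Orthonormal ℝ p' := hp.codRestrict U hpU
  have hq' : Orthonormal ℝ q' := hq.codRestrict U hqU
  have hspan' : ∀ (v : Fin k → EuclideanSpace ℝ (Fin n)) (hv : ∀ i, v i ∈ U),
      Submodule.span ℝ (Set.range v) = U →
      ⊤ ≤ Submodule.span ℝ (Set.range (Set.codRestrict v U hv)) := by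
    intro v hv hvspan
    have hmap : Submodule.map U.subtype (Submodule.span ℝ (Set.range (Set.codRestrict v U hv)))
        = Submodule.map U.subtype ⊤ := by
      rw [Submodule.map_span, Submodule.map_top, Submodule.range_subtype]
      have himg : ∀ s : Set (EuclideanSpace ℝ (Fin n)),
          s = Set.range v → span ℝ s = U := fun s hs => hs ▸ hvspan
      apply himg
      ext x
      simp [Set.codRestrict]
    rw [Submodule.map_injective_of_injective U.injective_subtype hmap]
  let P : OrthonormalBasis (Fin k) ℝ U := OrthonormalBasis.mk hp' (hspan' p hpU rfl)
  let Q : OrthonormalBasis (Fin k) ℝ U := OrthonormalBasis.mk hq' (hspan' q hqU hspan.symm)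
  set d : ℝ := P.toBasis.det q' with hd
  have habs : |d| = 1 := by
    have := P.det_to_matrix_orthonormalBasis Q
    rwa [Real.norm_eq_abs, show ⇑Q = q' from OrthonormalBasis.coe_mk _ _] at this
  have hdet : ∀ (g : AlternatingMap ℝ U ℝ (Fin k)), g q' = g p' * d := by
    intro g
    have h1 := g.eq_smul_basis_det P.toBasis
    have h2 := congrFun (congrArg (fun (f : AlternatingMap ℝ U ℝ (Fin k)) =>
      (f : (Fin k → U) → ℝ)) h1) q'
    simpa [OrthonormalBasis.coe_toBasis, show ⇑P = p' from OrthonormalBasis.coe_mk _ _,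
      smul_eq_mul] using h2
  have happ : ∀ (g : AlternatingMap ℝ (EuclideanSpace ℝ (Fin n)) ℝ (Fin k)),
      g q = g p * d := by
    intro g
    have := hdet (g.compLinearMap U.subtype)
    exact this
  refine ⟨by rw [happ φ, abs_mul, habs, mul_one], ?_⟩
  intro hpone hqone
  have hd1 : d = 1 := by have := happ φ; rw [hpone, hqone, one_mul] at this; exact this.symm
  rw [← sub_eq_zero]
  rw [← Module.forall_dual_apply_eq_zero_iff ℝ]
  intro ℓ
  have := hdet ((ℓ.compAlternatingMap ((ExteriorAlgebra.ιMulti ℝ k).compLinearMap U.subtype)))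
  rw [hd1, mul_one] at this
  simp only [LinearMap.compAlternatingMap_apply, AlternatingMap.compLinearMap_apply] at this
  have hqc : (fun i => U.subtype (q' i)) = q := rfl
  have hpc : (fun i => U.subtype (p' i)) = p := rfl
  rw [hqc, hpc] at this
  rw [map_sub, this, sub_self]

private lemma exists_unit_perp' {n : ℕ} {I V : Submodule ℝ (EuclideanSpace ℝ (Fin n))}
    (hIV : I ≤ V) (hne : I ≠ V) :
    ∃ a : EuclideanSpace ℝ (Fin n), a ∈ V ∧ a ∈ Iᗮ ∧ ‖a‖ = 1 := by
  obtain ⟨x, hxV, hxI⟩ := SetLike.exists_of_lt (lt_of_le_of_ne hIV hne)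
  set a₁ : EuclideanSpace ℝ (Fin n) := x - (orthogonalProjection I x : EuclideanSpace ℝ (Fin n))
    with ha₁
  have hmemperp : a₁ ∈ Iᗮ := sub_starProjection_mem_orthogonal (K := I) x
  have hmemV : a₁ ∈ V := sub_mem hxV (hIV (orthogonalProjection I x).2)
  have hne0 : a₁ ≠ 0 := by
    intro h
    rw [ha₁, sub_eq_zero] at h
    exact hxI (h ▸ (orthogonalProjection I x).2)
  exact ⟨‖a₁‖⁻¹ • a₁, smul_mem _ _ hmemV, smul_mem _ _ hmemperp, norm_smul_inv_norm hne0⟩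

private lemma sup_span_eq' {n m : ℕ} {I V : Submodule ℝ (EuclideanSpace ℝ (Fin n))}
    (hIV : I ≤ V) (hI : Module.finrank ℝ I = m) (hV : Module.finrank ℝ V = m + 1)
    {a : EuclideanSpace ℝ (Fin n)} (haV : a ∈ V) (haperp : a ∈ Iᗮ) (ha0 : a ≠ 0) :
    Submodule.span ℝ {a} ⊔ I = V := by
  have hle : Submodule.span ℝ {a} ⊔ I ≤ V :=
    sup_le ((Submodule.span_singleton_le_iff_mem a V).mpr haV) hIV
  have hinf : Submodule.span ℝ {a} ⊓ I = ⊥ := by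
    refine le_bot_iff.mp (le_trans (inf_le_inf_right I
      ((Submodule.span_singleton_le_iff_mem a Iᗮ).mpr haperp)) ?_)
    rw [inf_comm]
    exact (Submodule.orthogonal_disjoint I).le_bot
  have hfr := Submodule.finrank_sup_add_finrank_inf_eq (Submodule.span ℝ {a}) I
  rw [hinf, finrank_bot, finrank_span_singleton ha0, hI] at hfr
  exact (Submodule.eq_of_le_of_finrank_le hle (by omega))

private lemma inner_expand' {N : Type*} [NormedAddCommGroup N] [InnerProductSpace ℝ N]
    {a c : N} (haa : inner ℝ a a = (1:ℝ)) (hac : inner ℝ a c = (0:ℝ)) (x y : ℝ) :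
    inner ℝ (x • a + y • c) (x • a + y • c) = x^2 + y^2 * inner ℝ c c := by
  simp only [inner_add_left, inner_add_right, real_inner_smul_left, real_inner_smul_right,
    haa, hac]
  rw [real_inner_comm a c, hac]
  ring

private lemma inner_expand2' {N : Type*} [NormedAddCommGroup N] [InnerProductSpace ℝ N]
    {a c b : N} (t : ℝ) (hb : b = t • a + c) (haa : inner ℝ a a = (1:ℝ))
    (hac : inner ℝ a c = (0:ℝ)) : inner ℝ b b = t^2 + ‖c‖ * ‖c‖ := by
  subst hb
  simp only [inner_add_left, inner_add_right, real_inner_smul_left, real_inner_smul_right,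
    haa, hac, ← real_inner_self_eq_norm_mul_norm]
  rw [real_inner_comm a c, hac]
  ring

/-- **Intersecting Planes Lemma** (rigidity of contact planes).
Let `φ` be a `k`-covector on `ℝⁿ` (`1 ≤ k ≤ n`) of comass at most one, and let
`u`, `w` be orthonormal `k`-tuples with `φ u = 1` and `φ w = 1`. If the intersection
of the spans of `u` and `w` has dimension at least `k - 1`, then the spans coincide
and moreover `u₁ ∧ ⋯ ∧ u_k = w₁ ∧ ⋯ ∧ w_k` in the exterior algebra of `ℝⁿ`
(the two oriented `k`-planes coincide). -/
theorem intersecting_planes_rigidity {n k : ℕ} (hk : 1 ≤ k) (hkn : k ≤ n)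
    (φ : AlternatingMap ℝ (EuclideanSpace ℝ (Fin n)) ℝ (Fin k))
    (hcomass : ∀ v : Fin k → EuclideanSpace ℝ (Fin n), Orthonormal ℝ v → |φ v| ≤ 1)
    (u w : Fin k → EuclideanSpace ℝ (Fin n))
    (hu : Orthonormal ℝ u) (hw : Orthonormal ℝ w)
    (hφu : φ u = 1) (hφw : φ w = 1)
    (hdim : k - 1 ≤ Module.finrank ℝ
      ↥(Submodule.span ℝ (Set.range u) ⊓ Submodule.span ℝ (Set.range w))) :
    Submodule.span ℝ (Set.range u) = Submodule.span ℝ (Set.range w) ∧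
      ExteriorAlgebra.ιMulti ℝ k u = ExteriorAlgebra.ιMulti ℝ k w := by
  classical
  obtain ⟨m, rfl⟩ : ∃ m, k = m + 1 := ⟨k - 1, (Nat.succ_pred_eq_of_pos hk).symm⟩
  have hUW : Submodule.span ℝ (Set.range u) = Submodule.span ℝ (Set.range w) := by
    by_contra hne
    set U := Submodule.span ℝ (Set.range u) with hUdef
    set W := Submodule.span ℝ (Set.range w) with hWdef
    have hUrank : Module.finrank ℝ U = m + 1 := by
      rw [hUdef, finrank_span_eq_card hu.linearIndependent, Fintype.card_fin]
    have hWrank : Module.finrank ℝ W = m + 1 := by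
      rw [hWdef, finrank_span_eq_card hw.linearIndependent, Fintype.card_fin]
    set I := U ⊓ W with hIdef
    have hIU : I ≤ U := inf_le_left
    have hIW : I ≤ W := inf_le_right
    have hIrank : Module.finrank ℝ I = m := by
      have hle : Module.finrank ℝ I ≤ m + 1 := hUrank ▸ Submodule.finrank_mono hIU
      have hge : m ≤ Module.finrank ℝ I := by simpa using hdim
      have hneq : Module.finrank ℝ I ≠ m + 1 := by
        intro h
        have h1 : I = U := Submodule.eq_of_le_of_finrank_le hIU (by omega)
        have h2 : I = W := Submodule.eq_of_le_of_finrank_le hIW (by omega)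
        exact hne (h1.symm.trans h2)
      omega
    have hIneU : I ≠ U := fun h => by rw [h, hUrank] at hIrank; omega
    have hIneW : I ≠ W := fun h => by rw [h, hWrank] at hIrank; omega
    let e₀ : OrthonormalBasis (Fin m) ℝ I :=
      (stdOrthonormalBasis ℝ I).reindex (finCongr hIrank)
    set e : Fin m → EuclideanSpace ℝ (Fin n) := I.subtypeₗᵢ ∘ ⇑e₀ with hedef
    have he : Orthonormal ℝ e := I.subtypeₗᵢ.orthonormal_comp_iff.mpr e₀.orthonormal
    have heI : ∀ i, e i ∈ I := fun i => (e₀ i).2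
    have hespan : Submodule.span ℝ (Set.range e) = I := by
      have h1 : Set.range e = I.subtype '' Set.range ⇑e₀ := by rw [← Set.range_comp]; rfl
      have h2 : Submodule.span ℝ (Set.range ⇑e₀) = ⊤ := by
        rw [← OrthonormalBasis.coe_toBasis e₀]; exact e₀.toBasis.span_eq
      rw [h1, ← Submodule.map_span, h2, Submodule.map_top, Submodule.range_subtype]
    obtain ⟨a, haU, haperp, hanorm⟩ := exists_unit_perp' hIU hIneU
    obtain ⟨b, hbW, hbperp, hbnorm⟩ := exists_unit_perp' hIW hIneW
    have ha0 : a ≠ 0 := fun h => by rw [h, norm_zero] at hanorm; norm_num at hanorm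
    have hb0 : b ≠ 0 := fun h => by rw [h, norm_zero] at hbnorm; norm_num at hbnorm
    have hAsup : Submodule.span ℝ {a} ⊔ I = U := sup_span_eq' hIU hIrank hUrank haU haperp ha0
    have hBsup : Submodule.span ℝ {b} ⊔ I = W := sup_span_eq' hIW hIrank hWrank hbW hbperp hb0
    have hea : ∀ i, inner ℝ (e i) a = (0:ℝ) :=
      fun i => (Submodule.mem_orthogonal I a).mp haperp (e i) (heI i)
    have heb : ∀ i, inner ℝ (e i) b = (0:ℝ) :=
      fun i => (Submodule.mem_orthogonal I b).mp hbperp (e i) (heI i)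
    obtain ⟨t, htdef⟩ : ∃ t : ℝ, t = inner ℝ a b := ⟨_, rfl⟩
    by_cases h0 : b - t • a = 0
    · have hba : b = t • a := by rwa [sub_eq_zero] at h0
      have ht0 : t ≠ 0 := by
        intro h
        rw [h, zero_smul] at hba
        exact hb0 hba
      have hsp : Submodule.span ℝ {b} = Submodule.span ℝ {a} := by
        rw [hba]
        exact Submodule.span_singleton_smul_eq (isUnit_iff_ne_zero.mpr ht0) a
      exact hne (by rw [← hAsup, ← hBsup, hsp])
    · obtain ⟨c₁, hc₁def⟩ : ∃ v : EuclideanSpace ℝ (Fin n), v = b - t • a := ⟨_, rfl⟩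
      have h0' : c₁ ≠ 0 := by rw [hc₁def]; exact h0
      obtain ⟨c, hcdef⟩ : ∃ v : EuclideanSpace ℝ (Fin n), v = ‖c₁‖⁻¹ • c₁ := ⟨_, rfl⟩
      have hcnorm : ‖c‖ = 1 := by rw [hcdef]; exact norm_smul_inv_norm h0'
      have haa : inner ℝ a a = (1:ℝ) := by
        rw [real_inner_self_eq_norm_mul_norm, hanorm, one_mul]
      have hac₁ : inner ℝ a c₁ = (0:ℝ) := by
        rw [hc₁def, inner_sub_right, real_inner_smul_right, haa, htdef]
        ring
      have hac : inner ℝ a c = (0:ℝ) := by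
        rw [hcdef, real_inner_smul_right, hac₁, mul_zero]
      have hca : inner ℝ c a = (0:ℝ) := by rw [real_inner_comm]; exact hac
      have hcc : inner ℝ c c = (1:ℝ) := by
        rw [real_inner_self_eq_norm_mul_norm, hcnorm, one_mul]
      have hcperp : c ∈ Iᗮ := by
        rw [hcdef, hc₁def]
        exact Submodule.smul_mem _ _ (Submodule.sub_mem _ hbperp
          (Submodule.smul_mem _ _ haperp))
      have hec : ∀ i, inner ℝ (e i) c = (0:ℝ) :=
        fun i => (Submodule.mem_orthogonal I c).mp hcperp (e i) (heI i)
      have hsnocA : Orthonormal ℝ (Fin.snoc e a : Fin (m+1) → EuclideanSpace ℝ (Fin n)) :=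
        orthonormal_snoc' he hanorm hea
      have hsnocB : Orthonormal ℝ (Fin.snoc e b : Fin (m+1) → EuclideanSpace ℝ (Fin n)) :=
        orthonormal_snoc' he hbnorm heb
      have hAspan : Submodule.span ℝ (Set.range (Fin.snoc e a : Fin (m+1) →
          EuclideanSpace ℝ (Fin n))) = Submodule.span ℝ (Set.range u) := by
        rw [span_snoc', hespan, hAsup]
      have hBspan : Submodule.span ℝ (Set.range (Fin.snoc e b : Fin (m+1) →
          EuclideanSpace ℝ (Fin n))) = Submodule.span ℝ (Set.range w) := by
        rw [span_snoc', hespan, hBsup]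
      obtain ⟨tA, htA⟩ : ∃ r : ℝ, r = φ (Fin.snoc e a) := ⟨_, rfl⟩
      obtain ⟨tB, htB⟩ : ∃ r : ℝ, r = φ (Fin.snoc e b) := ⟨_, rfl⟩
      obtain ⟨s, hs⟩ : ∃ r : ℝ, r = φ (Fin.snoc e c) := ⟨_, rfl⟩
      have habsA : |tA| = 1 := by
        have h := (key' φ hsnocA hu hAspan).1
        rw [hφu, abs_one] at h
        rw [htA]
        exact h.symm
      have habsB : |tB| = 1 := by
        have h := (key' φ hsnocB hw hBspan).1
        rw [hφw, abs_one] at h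
        rw [htB]
        exact h.symm
      have hmul : ∀ (x y : ℝ), φ (Fin.snoc e (x • a + y • c)) = x * tA + y * s := by
        intro x y
        have h1 : φ (Fin.snoc e (x • a + y • c)) =
            φ (Fin.snoc e (x • a)) + φ (Fin.snoc e (y • c)) :=
          φ.toMultilinearMap.snoc_add e (x • a) (y • c)
        have h2 : φ (Fin.snoc e (x • a)) = x • φ (Fin.snoc e a) :=
          φ.toMultilinearMap.snoc_smul e x a
        have h3 : φ (Fin.snoc e (y • c)) = y • φ (Fin.snoc e c) :=
          φ.toMultilinearMap.snoc_smul e y c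
        rw [h1, h2, h3, smul_eq_mul, smul_eq_mul, ← htA, ← hs]
      have hs0 : s = 0 := by
        have key2 : ∀ x y : ℝ, x^2 + y^2 = 1 → |x * tA + y * s| ≤ 1 := by
          intro x y hxy
          have hinner : inner ℝ (x • a + y • c) (x • a + y • c) = (1:ℝ) := by
            rw [inner_expand' haa hac x y, hcc]
            nlinarith
          have hnorm : ‖x • a + y • c‖ = 1 := by
            have h := real_inner_self_eq_norm_mul_norm (x • a + y • c)
            rw [hinner] at h
            have h2 := norm_nonneg (x • a + y • c)
            nlinarith
          have hperp : ∀ i, inner ℝ (e i) (x • a + y • c) = (0:ℝ) := by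
            intro i
            rw [inner_add_right, real_inner_smul_right, real_inner_smul_right, hea, hec]
            ring
          have horth := orthonormal_snoc' he hnorm hperp
          have h := hcomass _ horth
          rwa [hmul x y] at h
        set r : ℝ := Real.sqrt (tA^2 + s^2) with hrdef
        have hr2 : r^2 = tA^2 + s^2 := Real.sq_sqrt (by positivity)
        have htA2 : tA^2 = 1 := by rw [← sq_abs, habsA]; norm_num
        have hrpos : 0 < r := by nlinarith [Real.sqrt_nonneg (tA^2 + s^2), sq_nonneg s]
        have hxy : (tA/r)^2 + (s/r)^2 = 1 := by
          field_simp
          nlinarith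
        have hval := key2 (tA/r) (s/r) hxy
        have hveq : tA/r * tA + s/r * s = r := by
          field_simp
          nlinarith
        rw [hveq, abs_of_pos hrpos] at hval
        have hsq : s^2 ≤ 0 := by nlinarith
        exact sq_eq_zero_iff.mp (le_antisymm hsq (sq_nonneg s))
      have hbeq : b = t • a + ‖c₁‖ • c := by
        rw [hcdef, smul_smul, mul_inv_cancel₀ (norm_ne_zero_iff.mpr h0'), one_smul, hc₁def]
        abel
      have htB_eq : tB = t * tA := by
        rw [htB, show (b : EuclideanSpace ℝ (Fin n)) = t • a + ‖c₁‖ • c from hbeq,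
          hmul t ‖c₁‖, hs0, mul_zero, add_zero]
      have ht2 : t^2 = 1 := by
        have h : |t| * |tA| = 1 := by rw [← abs_mul, ← htB_eq, habsB]
        rw [habsA, mul_one] at h
        rw [← sq_abs, h]
        norm_num
      have hbb : inner ℝ b b = (1:ℝ) := by
        rw [real_inner_self_eq_norm_mul_norm, hbnorm, one_mul]
      have hc₁c₁ : inner ℝ c₁ c₁ = ‖c₁‖ * ‖c₁‖ := real_inner_self_eq_norm_mul_norm c₁
      have hc₁a : inner ℝ c₁ a = (0:ℝ) := by rw [real_inner_comm]; exact hac₁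
      have hbexp : inner ℝ b b = t^2 + ‖c₁‖ * ‖c₁‖ :=
        inner_expand2' t (by rw [hc₁def]; abel) haa hac₁
      have h1 : t^2 + ‖c₁‖ * ‖c₁‖ = 1 := by rw [← hbexp, hbb]
      have h2 : ‖c₁‖ * ‖c₁‖ = 0 := by linarith
      exact h0' (norm_eq_zero.mp (mul_self_eq_zero.mp h2))
  exact ⟨hUW, (key' φ hu hw hUW).2 hφu hφw⟩
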